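/- Let F be a field of characteristic zero and let L be an n×n matrix over F. For each i ∈ {1,...,n}, set t_i = tr(L^i), and let t = (t_1,...,t_n). Then det(L) = (1/n!) · ∑_{σ∈Sym(n)} sgn(σ) · Z(σ, t), where sgn(σ) is the sign of the permutation σ. -/

import Mathlib

open Finset

open scoped Classical

noncomputable section

/-- `cycleCount σ i` is the number of cycles of length `i` in the cycle decomposition of the
permutation `σ` (fixed points are counted as cycles of length `1`). -/
def cycleCount {X : Type*} [Fintype X] [DecidableEq X] (σ : Equiv.Perm X) (i : ℕ) : ℕ :=
  if i = 1 then Fintype.card X - σ.support.card else σ.cycleType.count i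

/-- `Zmon n σ t = t₁^{c₁(σ)} ⋯ t_n^{c_n(σ)}`, the monomial of the cycle index polynomial
associated to `σ`, evaluated at `t = (t₁, …, t_n)`. -/
def Zmon {X : Type*} [Fintype X] [DecidableEq X] {R : Type*} [CommSemiring R] (n : ℕ)
    (σ : Equiv.Perm X) (t : Fin n → R) : R :=
  ∏ i : Fin n, t i ^ cycleCount σ (i.1 + 1)


open Equiv Equiv.Perm
section


variable {ι : Type*} [Fintype ι] [DecidableEq ι] {R : Type*} [CommRing R]

lemma pathSum (k : ℕ) (L A : Matrix ι ι R) :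
    ∑ v : Fin (k + 1) → ι,
      (∏ j : Fin k, L (v j.castSucc) (v j.succ)) * A (v (Fin.last k)) (v 0) =
      (L ^ k * A).trace := by
  induction k generalizing A with
  | zero =>
    rw [pow_zero, Matrix.one_mul, Matrix.trace]
    rw [← (Equiv.funUnique (Fin 1) ι).symm.sum_comp]
    simp [Matrix.diag]
  | succ k ih =>
    rw [← (Fin.consEquiv fun _ : Fin (k + 2) => ι).sum_comp]
    rw [Fintype.sum_prod_type]
    have key : ∀ (a : ι) (w : Fin (k + 1) → ι),
        (∏ j : Fin (k + 1),
            L ((Fin.consEquiv fun _ : Fin (k + 2) => ι) (a, w) j.castSucc)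
              ((Fin.consEquiv fun _ : Fin (k + 2) => ι) (a, w) j.succ)) *
          A ((Fin.consEquiv fun _ : Fin (k + 2) => ι) (a, w) (Fin.last (k + 1)))
            ((Fin.consEquiv fun _ : Fin (k + 2) => ι) (a, w) 0) =
        L a (w 0) * ((∏ j : Fin k, L (w j.castSucc) (w j.succ)) * A (w (Fin.last k)) a) := by
      intro a w
      rw [Fin.prod_univ_succ]
      have e1 : (Fin.last (k + 1)) = (Fin.last k).succ := rfl
      rw [e1]
      simp only [Fin.consEquiv_apply, Fin.cons_zero, Fin.cons_succ, Fin.castSucc_zero,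
        ← Fin.succ_castSucc]
      ring
    simp only [key]
    rw [← Finset.sum_comm]
    have key2 : ∀ w : Fin (k + 1) → ι,
        ∑ a : ι, L a (w 0) * ((∏ j : Fin k, L (w j.castSucc) (w j.succ)) * A (w (Fin.last k)) a) =
        (∏ j : Fin k, L (w j.castSucc) (w j.succ)) * (A * L) (w (Fin.last k)) (w 0) := by
      intro w
      rw [Matrix.mul_apply, Finset.mul_sum]
      exact Finset.sum_congr rfl fun a _ => by ring
    rw [Finset.sum_congr rfl fun w _ => key2 w, ih (A * L)]
    rw [← Matrix.mul_assoc, Matrix.trace_mul_comm, ← Matrix.mul_assoc, ← pow_succ']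

lemma rotSum (m : ℕ) (L : Matrix ι ι R) :
    ∑ v : Fin (m + 1) → ι, ∏ j : Fin (m + 1), L (v j) (v (finRotate (m + 1) j)) =
      (L ^ (m + 1)).trace := by
  have : ∀ v : Fin (m + 1) → ι,
      ∏ j : Fin (m + 1), L (v j) (v (finRotate (m + 1) j)) =
      (∏ j : Fin m, L (v j.castSucc) (v j.succ)) * L (v (Fin.last m)) (v 0) := by
    intro v
    rw [Fin.prod_univ_castSucc]
    congr 1
    · refine Finset.prod_congr rfl fun j _ => ?_
      rw [finRotate_succ_apply, Fin.coeSucc_eq_succ]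
    · rw [finRotate_last]
  rw [Finset.sum_congr rfl fun v _ => this v, pathSum, ← pow_succ]

lemma cycSum {Y : Type*} [Fintype Y] [Nonempty Y] (τ : Equiv.Perm Y)
    (hτ : τ.IsCycleOn (Finset.univ : Finset Y)) (L : Matrix ι ι R) :
    ∑ u : Y → ι, ∏ y : Y, L (u y) (u (τ y)) = (L ^ Fintype.card Y).trace := by
  obtain ⟨m, hm⟩ : ∃ m, Fintype.card Y = m + 1 :=
    ⟨Fintype.card Y - 1, (Nat.succ_pred_eq_of_pos Fintype.card_pos).symm⟩
  obtain ⟨y₀⟩ := ‹Nonempty Y›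
  have hcard : (Finset.univ : Finset Y).card = m + 1 := by
    rw [Finset.card_univ, hm]
  -- the enumeration of the cycle
  have hbij : Function.Bijective (fun j : Fin (m + 1) => (τ ^ (j : ℕ)) y₀) := by
    constructor
    · have aux : ∀ i j : Fin (m + 1), (i : ℕ) ≤ (j : ℕ) →
          (τ ^ (i : ℕ)) y₀ = (τ ^ (j : ℕ)) y₀ → i = j := by
        intro i j hle hij
        have h1 : (τ ^ ((j : ℕ) - (i : ℕ))) ((τ ^ (i : ℕ)) y₀) = (τ ^ (i : ℕ)) y₀ := by
          rw [← Equiv.Perm.mul_apply, ← pow_add, Nat.sub_add_cancel hle, hij]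
        rw [hτ.pow_apply_eq (Finset.mem_univ _), hcard] at h1
        have hlt : (j : ℕ) - (i : ℕ) < m + 1 := lt_of_le_of_lt (Nat.sub_le _ _) j.isLt
        have h0 : (j : ℕ) - (i : ℕ) = 0 := Nat.eq_zero_of_dvd_of_lt h1 hlt
        exact Fin.ext (Nat.le_antisymm hle (Nat.sub_eq_zero_iff_le.mp h0))
      intro i j hij
      rcases le_total (i : ℕ) (j : ℕ) with h | h
      · exact aux i j h hij
      · exact (aux j i h hij.symm).symm
    · intro b
      obtain ⟨k, hk, hkb⟩ := hτ.exists_pow_eq (Finset.mem_univ y₀) (Finset.mem_univ b)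
      rw [hcard] at hk
      exact ⟨⟨k, hk⟩, hkb⟩
  set e : Fin (m + 1) ≃ Y := Equiv.ofBijective _ hbij with he
  have hrot : ∀ j : Fin (m + 1), τ (e j) = e (finRotate (m + 1) j) := by
    intro j
    have h1 : τ (e j) = (τ ^ ((j : ℕ) + 1)) y₀ := by
      simp only [he, Equiv.ofBijective_apply]
      rw [pow_succ', Equiv.Perm.mul_apply]
    have h2 : e (finRotate (m + 1) j) = (τ ^ (((j + 1 : Fin (m + 1)) : ℕ))) y₀ := by
      simp only [he, Equiv.ofBijective_apply, finRotate_succ_apply]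
    rw [h1, h2]
    have := (hτ.pow_apply_eq_pow_apply (a := y₀) (Finset.mem_univ y₀)
      (m := (j : ℕ) + 1) (n := ((j + 1 : Fin (m + 1)) : ℕ))).mpr ?_
    · exact this
    · rw [hcard]
      have : ((j + 1 : Fin (m + 1)) : ℕ) = ((j : ℕ) + 1) % (m + 1) := by
        rw [Fin.add_def]
        simp
      rw [this]
      exact (Nat.mod_modEq _ _).symm
  have harr : ∀ u : Y → ι, ∏ y : Y, L (u y) (u (τ y)) =
      ∏ j : Fin (m + 1), L ((u ∘ e) j) ((u ∘ e) (finRotate (m + 1) j)) := by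
    intro u
    rw [← e.prod_comp fun y => L (u y) (u (τ y))]
    exact Finset.prod_congr rfl fun j _ => by rw [Function.comp, Function.comp, hrot]
  calc ∑ u : Y → ι, ∏ y : Y, L (u y) (u (τ y))
      = ∑ u : Y → ι, ∏ j : Fin (m + 1), L ((u ∘ e) j) ((u ∘ e) (finRotate (m + 1) j)) :=
        Finset.sum_congr rfl fun u _ => harr u
    _ = ∑ v : Fin (m + 1) → ι, ∏ j : Fin (m + 1), L (v j) (v (finRotate (m + 1) j)) := by
        rw [← (Equiv.arrowCongr e (Equiv.refl ι)).symm.sum_comp]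
        exact Finset.sum_congr rfl fun v _ => rfl
    _ = (L ^ Fintype.card Y).trace := by rw [rotSum, hm]

end
section


variable {ι : Type*} [Fintype ι] [DecidableEq ι] {R : Type*} [CommRing R]



variable {X : Type*} [Fintype X] [DecidableEq X]

lemma mk_apply_eq (σ : Equiv.Perm X) (x : X) :
    Quotient.mk (SameCycle.setoid σ) (σ x) = Quotient.mk (SameCycle.setoid σ) x :=
  Quotient.sound ⟨-1, by simp⟩

lemma step1 (σ : Equiv.Perm X) (L : Matrix ι ι R) :
    ∑ g : X → ι, ∏ x : X, L (g x) (g (σ x)) =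
    ∏ q : Quotient (SameCycle.setoid σ),
      (L ^ Fintype.card {x : X // Quotient.mk (SameCycle.setoid σ) x = q}).trace := by
  classical
  set S := SameCycle.setoid σ with hS
  have hmem : ∀ (q : Quotient S) (x : X),
      (Quotient.mk S x = q) ↔ (Quotient.mk S (σ x) = q) := fun q x => by
    rw [mk_apply_eq]
  let T : Quotient S → Type _ := fun q => {x : X // Quotient.mk S x = q}
  let τ : ∀ q, Equiv.Perm (T q) := fun q => σ.subtypePerm (fun x => (hmem q x).symm)
  let e : (∀ q, T q → ι) ≃ (X → ι) :=
    { toFun := fun h x => h (Quotient.mk S x) ⟨x, rfl⟩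
      invFun := fun g q y => g y.1
      left_inv := by
        intro h; funext q y
        rcases y with ⟨x, hx⟩
        subst hx
        rfl
      right_inv := fun g => rfl }
  have key : ∀ (h : ∀ q, T q → ι) (x : X) (q : Quotient S) (hq : Quotient.mk S x = q),
      e h x = h q ⟨x, hq⟩ := by
    intro h x q hq; subst hq; rfl
  rw [← e.sum_comp]
  have hsummand : ∀ h : ∀ q, T q → ι,
      ∏ x : X, L (e h x) (e h (σ x)) = ∏ q : Quotient S, ∏ y : T q, L (h q y) (h q (τ q y)) := by
    intro h
    rw [← (Equiv.sigmaFiberEquiv (Quotient.mk S)).prod_comp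
        (fun x => L (e h x) (e h (σ x)))]
    rw [← Finset.univ_sigma_univ, Finset.prod_sigma]
    refine Finset.prod_congr rfl fun q _ => Finset.prod_congr rfl fun y _ => ?_
    rcases y with ⟨x, hx⟩
    subst hx
    show L (e h x) (e h (σ x)) = _
    rw [key h (σ x) (Quotient.mk S x) (mk_apply_eq σ x)]
    rfl
  rw [Finset.sum_congr rfl fun h _ => hsummand h]
  rw [← Fintype.prod_sum (fun q (u : T q → ι) => ∏ y : T q, L (u y) (u (τ q y)))]
  refine Finset.prod_congr rfl fun q _ => ?_
  have : Nonempty (T q) := ⟨⟨q.out, Quotient.out_eq q⟩⟩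
  have hcy : (τ q).IsCycleOn (Finset.univ : Finset (T q)) := by
    constructor
    · rw [Finset.coe_univ]
      exact (τ q).bijective.bijOn_univ
    · intro a _ b _
      obtain ⟨k, hk⟩ : σ.SameCycle a.1 b.1 := Quotient.exact (a.2.trans b.2.symm)
      refine ⟨k, Subtype.ext ?_⟩
      show ((σ.subtypePerm (fun x => (hmem q x).symm)) ^ k) a = b.1
      rw [Equiv.Perm.subtypePerm_zpow]
      exact hk
  have := cycSum (τ q) hcy L
  convert this using 2 <;> congr!

end
section


variable {R : Type*} [CommRing R] {X : Type*} [Fintype X] [DecidableEq X]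

lemma fixed_of_sameCycle {σ : Equiv.Perm X} {x y : X} (h : σ.SameCycle x y) (hx : σ x = x) :
    y = x := by
  obtain ⟨k, hk⟩ := h
  rw [← hk]
  exact Function.IsFixedPt.perm_zpow hx k

lemma step4 (σ : Equiv.Perm X) (t : ℕ → R) :
    ∏ q : Quotient (SameCycle.setoid σ),
      t (Fintype.card {x : X // Quotient.mk (SameCycle.setoid σ) x = q}) =
    t 1 ^ (Fintype.card X - σ.support.card) *
      ∏ c ∈ σ.cycleFactorsFinset, t c.support.card := by
  classical
  set S := SameCycle.setoid σ with hS
  have hout : ∀ x : X, σ.SameCycle (Quotient.mk S x).out x := fun x =>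
    Quotient.mk_out (s := S) x
  set pfix : Quotient S → Prop := fun q => σ q.out = q.out with hpfix
  have hfixmk : ∀ x : X, pfix (Quotient.mk S x) ↔ σ x = x := by
    intro x
    constructor
    · intro h
      have h' : σ (Quotient.mk S x).out = (Quotient.mk S x).out := h
      have hx := fixed_of_sameCycle (hout x) h'
      rw [hx]; exact h'
    · intro h
      have h2 := fixed_of_sameCycle (hout x).symm h
      show σ (Quotient.mk S x).out = (Quotient.mk S x).out
      rw [h2]; exact h
  have card_one : ∀ q : Quotient S, pfix q →
      Fintype.card {x : X // Quotient.mk S x = q} = 1 := by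
    intro q hq
    rw [Fintype.card_eq_one_iff]
    refine ⟨⟨q.out, q.out_eq⟩, ?_⟩
    rintro ⟨x, hx⟩
    have : σ.SameCycle x q.out := Quotient.exact (hx.trans q.out_eq.symm)
    exact Subtype.ext (by simpa using fixed_of_sameCycle this.symm hq)
  have card_cyc : ∀ x : X, σ x ≠ x →
      Fintype.card {y : X // Quotient.mk S y = Quotient.mk S x} =
        (σ.cycleOf x).support.card := by
    intro x hx
    rw [Fintype.card_subtype]
    congr 1
    ext y
    simp only [Finset.mem_filter, Finset.mem_univ, true_and]
    rw [mem_support_cycleOf_iff' hx]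
    constructor
    · intro h
      exact (Quotient.exact h).symm
    · intro h
      exact Quotient.sound h.symm
  rw [← Finset.prod_filter_mul_prod_filter_not Finset.univ pfix]
  congr 1
  · have : ∀ q ∈ Finset.univ.filter pfix,
        t (Fintype.card {x : X // Quotient.mk S x = q}) = t 1 := by
      intro q hq
      rw [card_one q (Finset.mem_filter.mp hq).2]
    rw [Finset.prod_congr rfl this, Finset.prod_const]
    congr 1
    rw [← Finset.card_compl σ.support]
    apply Finset.card_bij (fun q _ => q.out)
    · intro q hq
      simp only [Finset.mem_compl, Equiv.Perm.mem_support, not_not]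
      exact (Finset.mem_filter.mp hq).2
    · intro q hq q' hq' h
      rw [← q.out_eq, ← q'.out_eq, h]
    · intro x hx
      have hfx : σ x = x := by simpa using hx
      refine ⟨Quotient.mk S x, ?_, ?_⟩
      · exact Finset.mem_filter.mpr ⟨Finset.mem_univ _, (hfixmk x).mpr hfx⟩
      · exact fixed_of_sameCycle (hout x).symm hfx
  · apply Finset.prod_bij (fun q (_ : q ∈ Finset.univ.filter fun q => ¬ pfix q) =>
      σ.cycleOf q.out)
    · intro q hq
      exact cycleOf_mem_cycleFactorsFinset_iff.mpr
        (Equiv.Perm.mem_support.mpr (Finset.mem_filter.mp hq).2)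
    · intro q hq q' hq' h
      have h2 : q'.out ∈ (σ.cycleOf q'.out).support :=
        (mem_support_cycleOf_iff' (Finset.mem_filter.mp hq').2).mpr (SameCycle.refl σ _)
      rw [← h] at h2
      have h3 : σ.SameCycle q.out q'.out :=
        ((mem_support_cycleOf_iff' (Finset.mem_filter.mp hq).2).mp h2)
      rw [← q.out_eq, ← q'.out_eq]
      exact Quotient.sound h3
    · intro c hc
      have hcyc : c.IsCycle := (mem_cycleFactorsFinset_iff.mp hc).1
      obtain ⟨x, hxc⟩ : ∃ x, x ∈ c.support := by
        obtain ⟨x, hx⟩ := hcyc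
        exact ⟨x, Equiv.Perm.mem_support.mpr hx.1⟩
      have hσx : σ x ≠ x := by
        rw [← (mem_cycleFactorsFinset_iff.mp hc).2 x hxc]
        exact Equiv.Perm.mem_support.mp hxc
      refine ⟨Quotient.mk S x, Finset.mem_filter.mpr ⟨Finset.mem_univ _, ?_⟩, ?_⟩
      · rw [hfixmk x]; exact hσx
      · exact ((hout x).cycleOf_eq).trans (cycle_is_cycleOf hxc hc).symm
    · intro q hq
      have h1 := card_cyc q.out (Finset.mem_filter.mp hq).2
      conv_lhs => rw [← q.out_eq]
      rw [h1]

end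
section
variable {R : Type*} [CommRing R]

lemma ZmonA (n : ℕ) (σ : Equiv.Perm (Fin n)) (τ : ℕ → R) :
    Zmon n σ (fun i => τ (i.1 + 1)) =
    τ 1 ^ (n - σ.support.card) * ∏ c ∈ σ.cycleFactorsFinset, τ c.support.card := by
  classical
  have hfac : ∏ c ∈ σ.cycleFactorsFinset, τ c.support.card = (σ.cycleType.map τ).prod := by
    rw [Equiv.Perm.cycleType_def, Multiset.map_map]
    rfl
  cases n with
  | zero =>
    have hσ : σ = 1 := by ext x; exact x.elim0
    subst hσ
    rw [Zmon]
    simp [Equiv.Perm.cycleFactorsFinset_one]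
  | succ m =>
    rw [Zmon, Fin.prod_univ_succ]
    have hv : ∀ i : Fin m, ((i.succ : Fin (m + 1)) : ℕ) + 1 = i.1 + 2 := fun i => by
      simp [Fin.val_succ]
    congr 1
    · simp [cycleCount, Fintype.card_fin]
    · rw [hfac, Finset.prod_multiset_map_count]
      have e_inj : Function.Injective (fun i : Fin m => i.1 + 2) := by
        intro i j h
        have h' : i.1 + 2 = j.1 + 2 := h
        exact Fin.ext (by omega)
      calc ∏ i : Fin m, (fun i : Fin (m+1) => τ (i.1 + 1)) i.succ
            ^ cycleCount σ ((i.succ : Fin (m+1)).1 + 1)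
          = ∏ i : Fin m, τ (i.1 + 2) ^ σ.cycleType.count (i.1 + 2) := by
            refine Finset.prod_congr rfl fun i _ => ?_
            rw [hv i, cycleCount, if_neg (by omega)]
            show τ (↑i.succ + 1) ^ _ = _
            rw [hv i]
        _ = ∏ k ∈ Finset.image (fun i : Fin m => i.1 + 2) Finset.univ,
              τ k ^ σ.cycleType.count k := by
            rw [Finset.prod_image (fun i _ j _ h => e_inj h)]
        _ = ∏ k ∈ σ.cycleType.toFinset, τ k ^ σ.cycleType.count k := by
            refine (Finset.prod_subset ?_ ?_).symm
            · intro k hk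
              rw [Multiset.mem_toFinset] at hk
              have h2 : 2 ≤ k := Equiv.Perm.two_le_of_mem_cycleType hk
              have h3 : k ≤ σ.support.card :=
                Equiv.Perm.le_card_support_of_mem_cycleType hk
              have h4 : σ.support.card ≤ m + 1 := by
                simpa using Finset.card_le_univ σ.support
              refine Finset.mem_image.mpr ⟨⟨k - 2, by omega⟩, Finset.mem_univ _, ?_⟩
              show k - 2 + 2 = k
              omega
            · intro k _ hk
              rw [Multiset.mem_toFinset] at hk
              rw [Multiset.count_eq_zero_of_notMem hk, pow_zero]

end
section


variable {F : Type*} [Field F] [CharZero F] {X : Type*} [Fintype X] [DecidableEq X]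

lemma Dbij (g : X → X) (hg : Function.Bijective g) (L : Matrix X X F) :
    ∑ σ : Equiv.Perm X, ((Equiv.Perm.sign σ : ℤ) : F) * ∏ x : X, L (g x) (g (σ x)) =
      L.det := by
  let e : X ≃ X := Equiv.ofBijective g hg
  rw [← Matrix.det_transpose, Matrix.det_apply']
  refine Fintype.sum_equiv ((Equiv.mulLeft e).trans (Equiv.mulRight e⁻¹)) _ _ fun σ => ?_
  have h1 : Equiv.Perm.sign (e * σ * e⁻¹) = Equiv.Perm.sign σ := by
    rw [Equiv.Perm.sign_mul, Equiv.Perm.sign_mul, mul_comm, ← mul_assoc,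
      ← Equiv.Perm.sign_mul, inv_mul_cancel]
    simp
  have h2 : ∏ i : X, L.transpose ((e * σ * e⁻¹) i) i = ∏ x : X, L (g x) (g (σ x)) := by
    rw [← e.prod_comp fun i => L.transpose ((e * σ * e⁻¹) i) i]
    refine Finset.prod_congr rfl fun x _ => ?_
    simp only [Matrix.transpose_apply, Equiv.Perm.mul_apply, Equiv.Perm.inv_def, Equiv.symm_apply_apply]
    rfl
  simp only [Equiv.trans_apply, Equiv.coe_mulLeft, Equiv.coe_mulRight]
  rw [show e * σ * e⁻¹ = (e * σ) * e⁻¹ from rfl] at h1 h2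
  rw [h1, h2]

lemma Dnon (g : X → X) (hg : ¬ Function.Injective g) (L : Matrix X X F) :
    ∑ σ : Equiv.Perm X, ((Equiv.Perm.sign σ : ℤ) : F) * ∏ x : X, L (g x) (g (σ x)) = 0 := by
  simp only [Function.Injective, not_forall] at hg
  obtain ⟨a, b, hab, hne⟩ := hg
  set s : Equiv.Perm X := Equiv.swap a b with hs
  set f : Equiv.Perm X → F :=
    fun σ => ((Equiv.Perm.sign σ : ℤ) : F) * ∏ x : X, L (g x) (g (σ x)) with hf
  have hgs : ∀ x, g (s x) = g x := by
    intro x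
    rcases eq_or_ne x a with rfl | hxa
    · rw [hs, Equiv.swap_apply_left, hab]
    rcases eq_or_ne x b with rfl | hxb
    · rw [hs, Equiv.swap_apply_right, hab]
    · rw [hs, Equiv.swap_apply_of_ne_of_ne hxa hxb]
  have key : ∀ σ, f (σ * s) = - f σ := by
    intro σ
    have hsign : ((Equiv.Perm.sign (σ * s) : ℤ) : F) = -((Equiv.Perm.sign σ : ℤ) : F) := by
      rw [Equiv.Perm.sign_mul, Equiv.Perm.sign_swap hne]
      push_cast
      ring
    have hprod : ∏ x : X, L (g x) (g ((σ * s) x)) = ∏ x : X, L (g x) (g (σ x)) := by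
      rw [← Equiv.prod_comp s fun x => L (g x) (g ((σ * s) x))]
      refine Finset.prod_congr rfl fun x _ => ?_
      simp only [Equiv.Perm.mul_apply]
      rw [hgs x, show s (s x) = x from Equiv.swap_apply_self a b x]
    rw [hf]
    simp only []
    rw [hsign, hprod]
    ring
  have h1 : ∑ σ : Equiv.Perm X, f (σ * s) = ∑ σ : Equiv.Perm X, f σ :=
    Equiv.sum_comp (Equiv.mulRight s) f
  have h2 : ∑ σ : Equiv.Perm X, f (σ * s) = - ∑ σ : Equiv.Perm X, f σ := by
    rw [Finset.sum_congr rfl fun σ _ => key σ, Finset.sum_neg_distrib]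
  have h3 : (2 : F) * ∑ σ : Equiv.Perm X, f σ = 0 := by
    rw [two_mul]
    nth_rewrite 1 [← h1]
    rw [h2]
    ring
  have := mul_eq_zero.mp h3
  rcases this with h | h
  · exact absurd h two_ne_zero
  · exact h

lemma count_bij (d : F) :
    ∑ g : X → X, (if Function.Bijective g then d else 0) =
      ((Fintype.card X).factorial : F) * d := by
  rw [← Finset.sum_filter]
  rw [Finset.sum_const]
  have hcard : (Finset.univ.filter fun g : X → X => Function.Bijective g).card =
      Fintype.card (Equiv.Perm X) := by
    rw [← Finset.card_univ]
    symm
    apply Finset.card_bij (fun (e : Equiv.Perm X) (_ : e ∈ Finset.univ) => (e : X → X))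
    · intro e _
      exact Finset.mem_filter.mpr ⟨Finset.mem_univ _, e.bijective⟩
    · intro e _ e' _ h
      exact Equiv.coe_fn_injective h
    · intro g hgf
      exact ⟨Equiv.ofBijective g (Finset.mem_filter.mp hgf).2, Finset.mem_univ _, rfl⟩
  rw [hcard, Fintype.card_perm, nsmul_eq_mul]

end

/-- **Amdeberhan's determinant formula.** For an `n × n` matrix `L` with `tᵢ = tr(Lⁱ)`,
`det L = (1/n!) ∑_{σ ∈ Sym(n)} sgn(σ) · Z(σ, t)`. -/
theorem det_eq_signed_cycle_index {F : Type*} [Field F] [CharZero F] (n : ℕ)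
    (L : Matrix (Fin n) (Fin n) F) :
    L.det =
      (n.factorial : F)⁻¹ *
        ∑ σ : Equiv.Perm (Fin n),
          ((Equiv.Perm.sign σ : ℤ) : F) *
            Zmon n σ (fun i => Matrix.trace (L ^ (i.1 + 1))) := by
  classical
  have hne : (n.factorial : F) ≠ 0 := Nat.cast_ne_zero.mpr (Nat.factorial_ne_zero n)
  have hper : ∀ σ : Equiv.Perm (Fin n),
      Zmon n σ (fun i => Matrix.trace (L ^ (i.1 + 1))) =
      ∑ g : Fin n → Fin n, ∏ x : Fin n, L (g x) (g (σ x)) := by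
    intro σ
    have hz := ZmonA n σ (fun k => Matrix.trace (L ^ k))
    have h4 := step4 σ (fun k => Matrix.trace (L ^ k))
    have h1 := step1 σ L
    rw [h1, h4, Fintype.card_fin]
    exact hz
  have main : ∑ σ : Equiv.Perm (Fin n),
      ((Equiv.Perm.sign σ : ℤ) : F) * Zmon n σ (fun i => Matrix.trace (L ^ (i.1 + 1))) =
      (n.factorial : F) * L.det := by
    calc ∑ σ : Equiv.Perm (Fin n),
          ((Equiv.Perm.sign σ : ℤ) : F) * Zmon n σ (fun i => Matrix.trace (L ^ (i.1 + 1)))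
        = ∑ σ : Equiv.Perm (Fin n), ∑ g : Fin n → Fin n,
            ((Equiv.Perm.sign σ : ℤ) : F) * ∏ x : Fin n, L (g x) (g (σ x)) := by
          refine Finset.sum_congr rfl fun σ _ => ?_
          rw [hper σ, Finset.mul_sum]
      _ = ∑ g : Fin n → Fin n, ∑ σ : Equiv.Perm (Fin n),
            ((Equiv.Perm.sign σ : ℤ) : F) * ∏ x : Fin n, L (g x) (g (σ x)) :=
          Finset.sum_comm
      _ = ∑ g : Fin n → Fin n, (if Function.Bijective g then L.det else 0) := by
          refine Finset.sum_congr rfl fun g _ => ?_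
          by_cases hb : Function.Bijective g
          · rw [if_pos hb]
            exact Dbij g hb L
          · rw [if_neg hb]
            exact Dnon g (fun hinj => hb (Finite.injective_iff_bijective.mp hinj)) L
      _ = ((Fintype.card (Fin n)).factorial : F) * L.det := count_bij L.det
      _ = (n.factorial : F) * L.det := by rw [Fintype.card_fin]
  rw [main, inv_mul_cancel_left₀ hne]

end
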